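/- Let k ≥ 1 be an integer and b > 1 a real number. Then b(k+1)x^k − k·x^(k−1) + 1 > 0 for every x ∈ (0,1); consequently the function g(x) = b·x^(k+1) − x^k + x − a (for any real a) is strictly increasing on [0,1]. -/
import Mathlib

lemma aux_pow_ineq (x : ℝ) (h0 : 0 ≤ x) (h1 : x ≤ 1) :
    ∀ n : ℕ, ((n : ℝ) + 1) * x ^ n ≤ n * x ^ (n + 1) + 1 := by
  intro n
  induction n with
  | zero => simp
  | succ n ih =>
    have hx : 0 ≤ (1 - x) * (1 - x ^ (n + 1)) :=
      mul_nonneg (by linarith) (by nlinarith [pow_le_one₀ h0 h1 (n := n + 1)])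
    have h2 := mul_le_mul_of_nonneg_left ih h0
    push_cast
    push_cast at h2
    nlinarith [pow_nonneg h0 n, pow_nonneg h0 (n + 1), pow_succ x (n + 1), pow_succ x n]

/-- For `k ≥ 1` and `b > 1`: `b(k+1)x^k − k·x^(k−1) + 1 > 0` on `(0,1)`;
consequently `g(x) = b·x^(k+1) − x^k + x − a` is strictly increasing on `[0,1]`. -/
theorem derivative_pos_and_strictMono (k : ℕ) (hk : 1 ≤ k) (b : ℝ) (hb : 1 < b) :
    (∀ x ∈ Set.Ioo (0 : ℝ) 1,
      0 < b * (k + 1) * x ^ k - k * x ^ (k - 1) + 1) ∧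
    ∀ a : ℝ, StrictMonoOn (fun x : ℝ => b * x ^ (k + 1) - x ^ k + x - a)
      (Set.Icc (0 : ℝ) 1) := by
  have key : ∀ x ∈ Set.Ioo (0 : ℝ) 1,
      0 < b * (k + 1) * x ^ k - k * x ^ (k - 1) + 1 := by
    rintro x ⟨hx0, hx1⟩
    have h := aux_pow_ineq x hx0.le hx1.le (k - 1)
    have hk1 : k - 1 + 1 = k := Nat.succ_pred_eq_of_pos hk
    rw [hk1] at h
    have hcast : ((k - 1 : ℕ) : ℝ) = (k : ℝ) - 1 := by
      have := Nat.cast_sub hk (R := ℝ); simpa using this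
    rw [hcast] at h
    have hxk : 0 < x ^ k := pow_pos hx0 k
    nlinarith [mul_pos (sub_pos.mpr hb) hxk, (show (1:ℝ) ≤ k by exact_mod_cast hk)]
  refine ⟨key, fun a => ?_⟩
  apply strictMonoOn_of_deriv_pos (convex_Icc 0 1)
  · exact (Continuous.continuousOn (by continuity))
  · intro x hx
    rw [interior_Icc] at hx
    have hd : HasDerivAt (fun x : ℝ => b * x ^ (k + 1) - x ^ k + x - a)
        (b * ((↑(k + 1)) * x ^ (k + 1 - 1)) - ↑k * x ^ (k - 1) + 1) x :=
      ((((hasDerivAt_pow (k + 1) x).const_mul b).sub (hasDerivAt_pow k x)).add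
        (hasDerivAt_id x)).sub_const a
    rw [hd.deriv]
    have := key x hx
    simp only [Nat.add_sub_cancel] at *
    push_cast
    linarith
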